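/- Fix N ≥ 1 and let H : ℝ^N × ℝ^N → ℝ be a smooth function of (u,v). Then H satisfies the four systems of equations (i) Σ_k u_k · ∂²H/∂v_k∂v_α = 0 for all α, (ii) Σ_k v_k · ∂²H/∂u_k∂u_i = 0 for all i, (iii) Σ_k u_k · ∂²H/∂v_k∂u_i = ∂H/∂v_i for all i, (iv) Σ_k v_k · ∂²H/∂u_k∂v_α = ∂H/∂u_α for all α, everywhere on ℝ^N × ℝ^N, if and only if there exist a symmetric real N×N matrix C = (C_{ij}) and a constant c ∈ ℝ such that H(u,v) = Σ_{i,j} C_{ij} u_i v_j + c. -/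

import Mathlib

/-- Partial derivative `∂f/∂uᵢ` in the first factor of `ℝ^N × ℝ^N`. -/
noncomputable def dU2 {N : ℕ} (i : Fin N)
    (f : (Fin N → ℝ) × (Fin N → ℝ) → ℝ) (p : (Fin N → ℝ) × (Fin N → ℝ)) : ℝ :=
  fderiv ℝ f p ((fun l => if l = i then 1 else 0), 0)

/-- Partial derivative `∂f/∂v_α` in the second factor of `ℝ^N × ℝ^N`. -/
noncomputable def dV2 {N : ℕ} (α : Fin N)
    (f : (Fin N → ℝ) × (Fin N → ℝ) → ℝ) (p : (Fin N → ℝ) × (Fin N → ℝ)) : ℝ :=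
  fderiv ℝ f p (0, (fun l => if l = α then 1 else 0))

open scoped BigOperators

variable {N : ℕ}

abbrev EE (N : ℕ) := (Fin N → ℝ) × (Fin N → ℝ)

def eU {N : ℕ} (i : Fin N) : EE N := ((fun l => if l = i then 1 else 0), 0)
def eV {N : ℕ} (α : Fin N) : EE N := (0, (fun l => if l = α then 1 else 0))

lemma smooth_d {f : EE N → ℝ} (hf : ContDiff ℝ (⊤ : ℕ∞) f) (w : EE N) :
    ContDiff ℝ (⊤ : ℕ∞) (fun p => fderiv ℝ f p w) := by
  have h1 : ContDiff ℝ (⊤ : ℕ∞) (fderiv ℝ f) := hf.fderiv_right (by exact_mod_cast le_top)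
  exact h1.clm_apply contDiff_const

lemma diff_of_smooth {f : EE N → ℝ} (hf : ContDiff ℝ (⊤ : ℕ∞) f) : Differentiable ℝ f :=
  hf.differentiable (by simp)

lemma swap_d {f : EE N → ℝ} (hf : ContDiff ℝ (⊤ : ℕ∞) f) (w w' : EE N) (p : EE N) :
    fderiv ℝ (fun q => fderiv ℝ f q w') p w = fderiv ℝ (fun q => fderiv ℝ f q w) p w' := by
  have hdf : ContDiff ℝ (⊤ : ℕ∞) (fderiv ℝ f) := hf.fderiv_right (by exact_mod_cast le_top)
  have key : ∀ v : EE N, fderiv ℝ (fun q => fderiv ℝ f q v) p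
      = (fderiv ℝ (fderiv ℝ f) p).flip v := by
    intro v
    have := fderiv_clm_apply (c := fderiv ℝ f) (u := fun _ => v) (x := p)
      ((hdf.differentiable (by simp)).differentiableAt)
      (differentiableAt_const v)
    simpa using this
  rw [key w', key w]
  have hsymm : IsSymmSndFDerivAt ℝ f p :=
    hf.contDiffAt.isSymmSndFDerivAt
      (by rw [show ((2:WithTop ℕ∞)) = (((2:ℕ∞)):WithTop ℕ∞) by norm_cast]; rw [minSmoothness_of_isRCLikeNormedField]; exact_mod_cast le_top)
  simpa using hsymm w w'

noncomputable def coordU {N : ℕ} (i : Fin N) : EE N →L[ℝ] ℝ :=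
  (ContinuousLinearMap.proj i).comp (ContinuousLinearMap.fst ℝ (Fin N → ℝ) (Fin N → ℝ))
noncomputable def coordV {N : ℕ} (α : Fin N) : EE N →L[ℝ] ℝ :=
  (ContinuousLinearMap.proj α).comp (ContinuousLinearMap.snd ℝ (Fin N → ℝ) (Fin N → ℝ))

@[simp] lemma coordU_apply (i : Fin N) (p : EE N) : coordU i p = p.1 i := rfl
@[simp] lemma coordV_apply (α : Fin N) (p : EE N) : coordV α p = p.2 α := rfl

@[simp] lemma eU_fst (i l : Fin N) : (eU i).1 l = if l = i then 1 else 0 := rfl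
@[simp] lemma eU_snd (i l : Fin N) : (eU i).2 l = 0 := rfl
@[simp] lemma eV_fst (α l : Fin N) : (eV α).1 l = 0 := rfl
@[simp] lemma eV_snd (α l : Fin N) : (eV α).2 l = if l = α then 1 else 0 := rfl

lemma hasFDerivAt_coordU (i : Fin N) (p : EE N) :
    HasFDerivAt (fun q : EE N => q.1 i) (coordU i) p := (coordU i).hasFDerivAt
lemma hasFDerivAt_coordV (α : Fin N) (p : EE N) :
    HasFDerivAt (fun q : EE N => q.2 α) (coordV α) p := (coordV α).hasFDerivAt

lemma decomp (w : EE N) :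
    w = (∑ j, w.1 j • eU j) + (∑ β, w.2 β • eV β) := by
  ext l
  · simp [eU, eV, Finset.sum_apply, Prod.fst_sum, Prod.snd_sum, mul_ite]
  · simp [eU, eV, Finset.sum_apply, Prod.fst_sum, Prod.snd_sum, mul_ite]

lemma clm_eq_zero (L : EE N →L[ℝ] ℝ) (h1 : ∀ i, L (eU i) = 0) (h2 : ∀ α, L (eV α) = 0) :
    ∀ w, L w = 0 := by
  intro w
  rw [decomp w]
  simp [h1, h2]

lemma fderiv_sum_mul_u (g : Fin N → EE N → ℝ) (hg : ∀ k, Differentiable ℝ (g k))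
    (p w : EE N) :
    fderiv ℝ (fun q => ∑ k, q.1 k * g k q) p w
      = ∑ k, (g k p * w.1 k + p.1 k * fderiv ℝ (g k) p w) := by
  have h : HasFDerivAt (fun q => ∑ k, q.1 k * g k q)
      (∑ k, (p.1 k • fderiv ℝ (g k) p + g k p • coordU k)) p := by
    apply HasFDerivAt.fun_sum
    intro k _
    exact (hasFDerivAt_coordU k p).mul ((hg k p).hasFDerivAt)
  rw [h.fderiv]
  simp [Finset.sum_apply, add_comm]

lemma fderiv_sum_mul_v (g : Fin N → EE N → ℝ) (hg : ∀ k, Differentiable ℝ (g k))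
    (p w : EE N) :
    fderiv ℝ (fun q => ∑ k, q.2 k * g k q) p w
      = ∑ k, (g k p * w.2 k + p.2 k * fderiv ℝ (g k) p w) := by
  have h : HasFDerivAt (fun q => ∑ k, q.2 k * g k q)
      (∑ k, (p.2 k • fderiv ℝ (g k) p + g k p • coordV k)) p := by
    apply HasFDerivAt.fun_sum
    intro k _
    exact (hasFDerivAt_coordV k p).mul ((hg k p).hasFDerivAt)
  rw [h.fderiv]
  simp [Finset.sum_apply, add_comm]

lemma const_of_partials_zero (f : EE N → ℝ) (hf : Differentiable ℝ f)
    (hU : ∀ i p, fderiv ℝ f p (eU i) = 0) (hV : ∀ α p, fderiv ℝ f p (eV α) = 0) :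
    ∀ p, f p = f 0 := by
  intro p
  apply is_const_of_fderiv_eq_zero hf _ p 0
  intro x
  refine ContinuousLinearMap.ext fun w => ?_
  exact clm_eq_zero (fderiv ℝ f x) (fun i => hU i x) (fun α => hV α x) w

lemma vv_zero {H : EE N → ℝ} (hH : ContDiff ℝ (⊤ : ℕ∞) H)
    (h1 : ∀ α p, ∑ k, p.1 k * fderiv ℝ (fun q => fderiv ℝ H q (eV α)) p (eV k) = 0)
    (h3 : ∀ i p, ∑ k, p.1 k * fderiv ℝ (fun q => fderiv ℝ H q (eU i)) p (eV k)
            = fderiv ℝ H p (eV i)) :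
    ∀ α i p, fderiv ℝ (fun q => fderiv ℝ H q (eV α)) p (eV i) = 0 := by
  intro α i p
  have smV : ∀ β : Fin N, ContDiff ℝ (⊤ : ℕ∞) (fun q => fderiv ℝ H q (eV β)) :=
    fun β => smooth_d hH (eV β)
  have smU : ∀ j : Fin N, ContDiff ℝ (⊤ : ℕ∞) (fun q => fderiv ℝ H q (eU j)) :=
    fun j => smooth_d hH (eU j)
  -- differentiate equation (i) in direction eU i
  have hz : (fun p : EE N => ∑ k, p.1 k * fderiv ℝ (fun q => fderiv ℝ H q (eV α)) p (eV k))
      = fun _ => (0:ℝ) := funext (h1 α)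
  have e2 := fderiv_sum_mul_u
      (fun k q => fderiv ℝ (fun r => fderiv ℝ H r (eV α)) q (eV k))
      (fun k => diff_of_smooth (smooth_d (smV α) (eV k))) p (eU i)
  beta_reduce at e2
  rw [hz] at e2
  simp only [fderiv_fun_const, Pi.zero_apply, ContinuousLinearMap.zero_apply] at e2
  -- e2 : 0 = ∑ k, (... * (eU i).1 k + p.1 k * fderiv (...) p (eU i))
  have conv1 : ∀ k : Fin N,
      fderiv ℝ (fun q => fderiv ℝ (fun r => fderiv ℝ H r (eV α)) q (eV k)) p (eU i)
        = fderiv ℝ (fun q => fderiv ℝ (fun r => fderiv ℝ H r (eU i)) q (eV k)) p (eV α) := by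
    intro k
    rw [swap_d (smV α) (eU i) (eV k) p]
    rw [show (fun q => fderiv ℝ (fun r => fderiv ℝ H r (eV α)) q (eU i))
        = (fun q => fderiv ℝ (fun r => fderiv ℝ H r (eU i)) q (eV α))
        from funext fun q => swap_d hH (eU i) (eV α) q]
    exact swap_d (smU i) (eV k) (eV α) p
  simp only [conv1, eU_fst, mul_ite, mul_one, mul_zero, Finset.sum_add_distrib,
    Finset.sum_ite_eq', Finset.mem_univ, if_true] at e2
  -- differentiate equation (iii) in direction eV α
  have hz3 : (fun p : EE N => ∑ k, p.1 k * fderiv ℝ (fun q => fderiv ℝ H q (eU i)) p (eV k))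
      = (fun p => fderiv ℝ H p (eV i)) := funext (h3 i)
  have e3 := fderiv_sum_mul_u
      (fun k q => fderiv ℝ (fun r => fderiv ℝ H r (eU i)) q (eV k))
      (fun k => diff_of_smooth (smooth_d (smU i) (eV k))) p (eV α)
  beta_reduce at e3
  rw [hz3, swap_d hH (eV α) (eV i) p] at e3
  simp only [eV_fst, mul_zero, zero_add, Finset.sum_add_distrib, Finset.sum_const_zero] at e3
  linarith [e2, e3]

lemma uu_zero {H : EE N → ℝ} (hH : ContDiff ℝ (⊤ : ℕ∞) H)
    (h2 : ∀ i p, ∑ k, p.2 k * fderiv ℝ (fun q => fderiv ℝ H q (eU i)) p (eU k) = 0)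
    (h4 : ∀ α p, ∑ k, p.2 k * fderiv ℝ (fun q => fderiv ℝ H q (eV α)) p (eU k)
            = fderiv ℝ H p (eU α)) :
    ∀ i j p, fderiv ℝ (fun q => fderiv ℝ H q (eU i)) p (eU j) = 0 := by
  intro i j p
  have smV : ∀ β : Fin N, ContDiff ℝ (⊤ : ℕ∞) (fun q => fderiv ℝ H q (eV β)) :=
    fun β => smooth_d hH (eV β)
  have smU : ∀ m : Fin N, ContDiff ℝ (⊤ : ℕ∞) (fun q => fderiv ℝ H q (eU m)) :=
    fun m => smooth_d hH (eU m)
  have hz : (fun p : EE N => ∑ k, p.2 k * fderiv ℝ (fun q => fderiv ℝ H q (eU i)) p (eU k))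
      = fun _ => (0:ℝ) := funext (h2 i)
  have e2 := fderiv_sum_mul_v
      (fun k q => fderiv ℝ (fun r => fderiv ℝ H r (eU i)) q (eU k))
      (fun k => diff_of_smooth (smooth_d (smU i) (eU k))) p (eV j)
  beta_reduce at e2
  rw [hz] at e2
  simp only [fderiv_fun_const, Pi.zero_apply, ContinuousLinearMap.zero_apply] at e2
  have conv1 : ∀ k : Fin N,
      fderiv ℝ (fun q => fderiv ℝ (fun r => fderiv ℝ H r (eU i)) q (eU k)) p (eV j)
        = fderiv ℝ (fun q => fderiv ℝ (fun r => fderiv ℝ H r (eV j)) q (eU k)) p (eU i) := by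
    intro k
    rw [swap_d (smU i) (eV j) (eU k) p]
    rw [show (fun q => fderiv ℝ (fun r => fderiv ℝ H r (eU i)) q (eV j))
        = (fun q => fderiv ℝ (fun r => fderiv ℝ H r (eV j)) q (eU i))
        from funext fun q => swap_d hH (eV j) (eU i) q]
    exact swap_d (smV j) (eU k) (eU i) p
  simp only [conv1, eV_snd, mul_ite, mul_one, mul_zero, Finset.sum_add_distrib,
    Finset.sum_ite_eq', Finset.mem_univ, if_true] at e2
  have hz4 : (fun p : EE N => ∑ k, p.2 k * fderiv ℝ (fun q => fderiv ℝ H q (eV j)) p (eU k))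
      = (fun p => fderiv ℝ H p (eU j)) := funext (h4 j)
  have e3 := fderiv_sum_mul_v
      (fun k q => fderiv ℝ (fun r => fderiv ℝ H r (eV j)) q (eU k))
      (fun k => diff_of_smooth (smooth_d (smV j) (eU k))) p (eU i)
  beta_reduce at e3
  rw [hz4, swap_d hH (eU i) (eU j) p] at e3
  simp only [eU_snd, mul_zero, zero_add, Finset.sum_add_distrib, Finset.sum_const_zero] at e3
  linarith [e2, e3]

lemma mixed_const {H : EE N → ℝ} (hH : ContDiff ℝ (⊤ : ℕ∞) H)
    (huu : ∀ i j p, fderiv ℝ (fun q => fderiv ℝ H q (eU i)) p (eU j) = 0)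
    (hvv : ∀ α i p, fderiv ℝ (fun q => fderiv ℝ H q (eV α)) p (eV i) = 0) :
    ∀ i α p, fderiv ℝ (fun q => fderiv ℝ H q (eU i)) p (eV α)
        = fderiv ℝ (fun q => fderiv ℝ H q (eU i)) 0 (eV α) := by
  intro i α p
  have smU : ∀ m : Fin N, ContDiff ℝ (⊤ : ℕ∞) (fun q => fderiv ℝ H q (eU m)) :=
    fun m => smooth_d hH (eU m)
  have smV : ∀ β : Fin N, ContDiff ℝ (⊤ : ℕ∞) (fun q => fderiv ℝ H q (eV β)) :=
    fun β => smooth_d hH (eV β)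
  refine const_of_partials_zero _ (diff_of_smooth (smooth_d (smU i) (eV α))) ?_ ?_ p
  · intro j p'
    rw [swap_d (smU i) (eU j) (eV α) p']
    rw [show (fun q => fderiv ℝ (fun r => fderiv ℝ H r (eU i)) q (eU j))
        = (fun _ : EE N => (0:ℝ)) from funext fun q => huu i j q]
    simp
  · intro β p'
    rw [swap_d (smU i) (eV β) (eV α) p']
    rw [show (fun q => fderiv ℝ (fun r => fderiv ℝ H r (eU i)) q (eV β))
        = (fun q => fderiv ℝ (fun r => fderiv ℝ H r (eV β)) q (eU i))
        from funext fun q => (swap_d hH (eU i) (eV β) q).symm]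
    rw [swap_d (smV β) (eV α) (eU i) p']
    rw [show (fun q => fderiv ℝ (fun r => fderiv ℝ H r (eV β)) q (eV α))
        = (fun _ : EE N => (0:ℝ)) from funext fun q => hvv β α q]
    simp

lemma gU_affine {H : EE N → ℝ} (hH : ContDiff ℝ (⊤ : ℕ∞) H)
    (huu : ∀ i j p, fderiv ℝ (fun q => fderiv ℝ H q (eU i)) p (eU j) = 0)
    (hvv : ∀ α i p, fderiv ℝ (fun q => fderiv ℝ H q (eV α)) p (eV i) = 0) :
    ∀ i p, fderiv ℝ H p (eU i)
        = (∑ j, fderiv ℝ (fun q => fderiv ℝ H q (eU i)) 0 (eV j) * p.2 j)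
          + fderiv ℝ H 0 (eU i) := by
  intro i p
  have smU : ContDiff ℝ (⊤ : ℕ∞) (fun q => fderiv ℝ H q (eU i)) := smooth_d hH (eU i)
  set C : Fin N → ℝ := fun j => fderiv ℝ (fun q => fderiv ℝ H q (eU i)) 0 (eV j) with hC
  set L : EE N →L[ℝ] ℝ := ∑ j, C j • coordV j with hL
  have hLapp : ∀ q : EE N, L q = ∑ j, C j * q.2 j := by
    intro q; simp [hL, ContinuousLinearMap.sum_apply]
  have key : ∀ q : EE N, fderiv ℝ H q (eU i) - L q = fderiv ℝ H 0 (eU i) - L 0 := by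
    have hdiff : Differentiable ℝ (fun q : EE N => fderiv ℝ H q (eU i) - L q) :=
      (diff_of_smooth smU).sub L.differentiable
    have hfd : ∀ q : EE N, fderiv ℝ (fun q : EE N => fderiv ℝ H q (eU i) - L q) q
        = fderiv ℝ (fun q => fderiv ℝ H q (eU i)) q - L := by
      intro q
      exact (((diff_of_smooth smU) q).hasFDerivAt.sub L.hasFDerivAt).fderiv
    refine const_of_partials_zero _ hdiff ?_ ?_
    · intro m q
      rw [hfd q]
      simp [huu i m q, hL, ContinuousLinearMap.sum_apply]
    · intro β q
      rw [hfd q]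
      have := mixed_const hH huu hvv i β q
      simp [ContinuousLinearMap.sub_apply, this, hL, ContinuousLinearMap.sum_apply, hC]
  have := key p
  rw [hLapp p] at this
  have h0 : L 0 = 0 := by simp
  rw [h0] at this
  linarith [this]

lemma gV_affine {H : EE N → ℝ} (hH : ContDiff ℝ (⊤ : ℕ∞) H)
    (huu : ∀ i j p, fderiv ℝ (fun q => fderiv ℝ H q (eU i)) p (eU j) = 0)
    (hvv : ∀ α i p, fderiv ℝ (fun q => fderiv ℝ H q (eV α)) p (eV i) = 0) :
    ∀ α p, fderiv ℝ H p (eV α)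
        = (∑ m, fderiv ℝ (fun q => fderiv ℝ H q (eU m)) 0 (eV α) * p.1 m)
          + fderiv ℝ H 0 (eV α) := by
  intro α p
  have smV : ContDiff ℝ (⊤ : ℕ∞) (fun q => fderiv ℝ H q (eV α)) := smooth_d hH (eV α)
  set C : Fin N → ℝ := fun m => fderiv ℝ (fun q => fderiv ℝ H q (eU m)) 0 (eV α) with hC
  set L : EE N →L[ℝ] ℝ := ∑ m, C m • coordU m with hL
  have hLapp : ∀ q : EE N, L q = ∑ m, C m * q.1 m := by
    intro q; simp [hL, ContinuousLinearMap.sum_apply]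
  have key : ∀ q : EE N, fderiv ℝ H q (eV α) - L q = fderiv ℝ H 0 (eV α) - L 0 := by
    have hdiff : Differentiable ℝ (fun q : EE N => fderiv ℝ H q (eV α) - L q) :=
      (diff_of_smooth smV).sub L.differentiable
    have hfd : ∀ q : EE N, fderiv ℝ (fun q : EE N => fderiv ℝ H q (eV α) - L q) q
        = fderiv ℝ (fun q => fderiv ℝ H q (eV α)) q - L := by
      intro q
      exact (((diff_of_smooth smV) q).hasFDerivAt.sub L.hasFDerivAt).fderiv
    refine const_of_partials_zero _ hdiff ?_ ?_
    · intro m q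
      rw [hfd q]
      have h1 : fderiv ℝ (fun q => fderiv ℝ H q (eV α)) q (eU m)
          = fderiv ℝ (fun q => fderiv ℝ H q (eU m)) q (eV α) :=
        swap_d hH (eU m) (eV α) q
      have h2 := mixed_const hH huu hvv m α q
      simp [ContinuousLinearMap.sub_apply, h1, h2, hL, ContinuousLinearMap.sum_apply, hC]
    · intro β q
      rw [hfd q]
      simp [ContinuousLinearMap.sub_apply, hvv α β q, hL, ContinuousLinearMap.sum_apply]
  have := key p
  rw [hLapp p] at this
  have h0 : L 0 = 0 := by simp
  rw [h0] at this
  linarith [this]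

noncomputable def LB (C : Matrix (Fin N) (Fin N) ℝ) (p : EE N) : EE N →L[ℝ] ℝ :=
  ∑ i, ∑ j, ((C i j * p.1 i) • coordV j + p.2 j • C i j • coordU i)

lemma hasFDerivAt_B (C : Matrix (Fin N) (Fin N) ℝ) (p : EE N) :
    HasFDerivAt (fun q : EE N => ∑ i, ∑ j, C i j * q.1 i * q.2 j) (LB C p) p := by
  apply HasFDerivAt.fun_sum
  intro i _
  apply HasFDerivAt.fun_sum
  intro j _
  have h1 : HasFDerivAt (fun q : EE N => C i j * q.1 i) (C i j • coordU i) p :=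
    (hasFDerivAt_coordU i p).const_mul (C i j)
  have := h1.fun_mul (hasFDerivAt_coordV j p)
  simpa using this

lemma LB_apply_U (C : Matrix (Fin N) (Fin N) ℝ) (p : EE N) (m : Fin N) :
    LB C p (eU m) = ∑ j, C m j * p.2 j := by
  simp [LB, ContinuousLinearMap.sum_apply, mul_ite, mul_comm, Finset.sum_ite_eq']

lemma LB_apply_V (C : Matrix (Fin N) (Fin N) ℝ) (p : EE N) (β : Fin N) :
    LB C p (eV β) = ∑ i, C i β * p.1 i := by
  simp [LB, ContinuousLinearMap.sum_apply, mul_ite, mul_comm, Finset.sum_ite_eq']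

lemma forward_main {H : EE N → ℝ} (hH : ContDiff ℝ (⊤ : ℕ∞) H)
    (h1 : ∀ α p, ∑ k, p.1 k * fderiv ℝ (fun q => fderiv ℝ H q (eV α)) p (eV k) = 0)
    (h2 : ∀ i p, ∑ k, p.2 k * fderiv ℝ (fun q => fderiv ℝ H q (eU i)) p (eU k) = 0)
    (h3 : ∀ i p, ∑ k, p.1 k * fderiv ℝ (fun q => fderiv ℝ H q (eU i)) p (eV k)
            = fderiv ℝ H p (eV i))
    (h4 : ∀ α p, ∑ k, p.2 k * fderiv ℝ (fun q => fderiv ℝ H q (eV α)) p (eU k)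
            = fderiv ℝ H p (eU α)) :
    ∃ (C : Matrix (Fin N) (Fin N) ℝ) (c : ℝ), C.IsSymm ∧
        ∀ p : EE N, H p = (∑ i, ∑ j, C i j * p.1 i * p.2 j) + c := by
  have huu := uu_zero hH h2 h4
  have hvv := vv_zero hH h1 h3
  have mix := mixed_const hH huu hvv
  set C : Matrix (Fin N) (Fin N) ℝ :=
    Matrix.of (fun i j => fderiv ℝ (fun q => fderiv ℝ H q (eU i)) 0 (eV j)) with hCdef
  have hCij : ∀ i j, C i j = fderiv ℝ (fun q => fderiv ℝ H q (eU i)) 0 (eV j) := fun _ _ => rfl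
  set a : Fin N → ℝ := fun i => fderiv ℝ H 0 (eU i) with ha
  set b : Fin N → ℝ := fun α => fderiv ℝ H 0 (eV α) with hb
  have hga := gU_affine hH huu hvv
  have hgb := gV_affine hH huu hvv
  -- consequence of (iii)
  have e3 : ∀ (i : Fin N) (p : EE N), ∑ k, p.1 k * C i k = (∑ m, C m i * p.1 m) + b i := by
    intro i p
    have h := h3 i p
    have hrw : ∀ k : Fin N, fderiv ℝ (fun q => fderiv ℝ H q (eU i)) p (eV k) = C i k :=
      fun k => mix i k p
    rw [Finset.sum_congr rfl (fun k _ => by rw [hrw k]), hgb i p] at h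
    exact h
  -- consequence of (iv)
  have e4 : ∀ (α : Fin N) (p : EE N), ∑ k, p.2 k * C k α = (∑ j, C α j * p.2 j) + a α := by
    intro α p
    have h := h4 α p
    have hrw : ∀ k : Fin N, fderiv ℝ (fun q => fderiv ℝ H q (eV α)) p (eU k) = C k α := by
      intro k
      rw [swap_d hH (eU k) (eV α) p]
      exact mix k α p
    rw [Finset.sum_congr rfl (fun k _ => by rw [hrw k]), hga α p] at h
    exact h
  have hb0 : ∀ i, b i = 0 := by
    intro i
    have := e3 i 0
    simpa using this.symm
  have ha0 : ∀ α, a α = 0 := by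
    intro α
    have := e4 α 0
    simpa using this.symm
  have hsymm : C.IsSymm := by
    apply Matrix.IsSymm.ext
    intro m i
    have := e3 i (eU m)
    simp only [eU_fst, mul_ite, mul_one, mul_zero, ite_mul, one_mul, zero_mul,
      Finset.sum_ite_eq', Finset.mem_univ, if_true, hb0 i, add_zero] at this
    -- this : C i m = C m i
    exact this
  -- reconstruction
  refine ⟨C, H 0, hsymm, ?_⟩
  have key : ∀ p : EE N, H p - (∑ i, ∑ j, C i j * p.1 i * p.2 j)
      = H 0 - (∑ i, ∑ j, C i j * (0:EE N).1 i * (0:EE N).2 j) := by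
    have hdiff : Differentiable ℝ
        (fun p : EE N => H p - ∑ i, ∑ j, C i j * p.1 i * p.2 j) := by
      intro p
      exact ((diff_of_smooth hH p).sub (hasFDerivAt_B C p).differentiableAt)
    have hfd : ∀ p : EE N,
        fderiv ℝ (fun p : EE N => H p - ∑ i, ∑ j, C i j * p.1 i * p.2 j) p
          = fderiv ℝ H p - LB C p := by
      intro p
      exact (((diff_of_smooth hH p).hasFDerivAt).sub (hasFDerivAt_B C p)).fderiv
    refine const_of_partials_zero _ hdiff ?_ ?_
    · intro m p
      rw [hfd p]
      have h1' := hga m p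
      rw [ContinuousLinearMap.sub_apply, LB_apply_U, h1']
      have h2' : (fderiv ℝ H 0) (eU m) = 0 := ha0 m
      rw [h2',
        Finset.sum_congr rfl (fun j (_ : j ∈ Finset.univ) =>
          (by rw [hCij] :
            fderiv ℝ (fun q => fderiv ℝ H q (eU m)) 0 (eV j) * p.2 j = C m j * p.2 j))]
      ring
    · intro β p
      rw [hfd p]
      have h1' := hgb β p
      rw [ContinuousLinearMap.sub_apply, LB_apply_V, h1']
      have h2' : (fderiv ℝ H 0) (eV β) = 0 := hb0 β
      rw [h2',
        Finset.sum_congr rfl (fun m (_ : m ∈ Finset.univ) =>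
          (by rw [hCij] :
            fderiv ℝ (fun q => fderiv ℝ H q (eU m)) 0 (eV β) * p.1 m = C m β * p.1 m))]
      ring
  intro p
  have := key p
  simp only [Prod.fst_zero, Prod.snd_zero, Pi.zero_apply, mul_zero, Finset.sum_const_zero,
    sub_zero] at this
  linarith [this]

lemma fderiv_linU (d : Fin N → ℝ) (p w : EE N) :
    fderiv ℝ (fun q : EE N => ∑ j, d j * q.1 j) p w = ∑ j, d j * w.1 j := by
  have h : HasFDerivAt (fun q : EE N => ∑ j, d j * q.1 j) (∑ j, d j • coordU j) p := by
    apply HasFDerivAt.fun_sum; intro j _; exact (hasFDerivAt_coordU j p).const_mul (d j)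
  rw [h.fderiv]; simp [ContinuousLinearMap.sum_apply]

lemma fderiv_linV (d : Fin N → ℝ) (p w : EE N) :
    fderiv ℝ (fun q : EE N => ∑ j, d j * q.2 j) p w = ∑ j, d j * w.2 j := by
  have h : HasFDerivAt (fun q : EE N => ∑ j, d j * q.2 j) (∑ j, d j • coordV j) p := by
    apply HasFDerivAt.fun_sum; intro j _; exact (hasFDerivAt_coordV j p).const_mul (d j)
  rw [h.fderiv]; simp [ContinuousLinearMap.sum_apply]

lemma backward_main {H : EE N → ℝ} (C : Matrix (Fin N) (Fin N) ℝ) (c : ℝ)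
    (hsym : C.IsSymm)
    (hHp : ∀ p : EE N, H p = (∑ i, ∑ j, C i j * p.1 i * p.2 j) + c) :
    (∀ (α : Fin N) (p : EE N),
        ∑ k, p.1 k * fderiv ℝ (fun q => fderiv ℝ H q (eV α)) p (eV k) = 0) ∧
    (∀ (i : Fin N) (p : EE N),
        ∑ k, p.2 k * fderiv ℝ (fun q => fderiv ℝ H q (eU i)) p (eU k) = 0) ∧
    (∀ (i : Fin N) (p : EE N),
        ∑ k, p.1 k * fderiv ℝ (fun q => fderiv ℝ H q (eU i)) p (eV k)
          = fderiv ℝ H p (eV i)) ∧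
    (∀ (α : Fin N) (p : EE N),
        ∑ k, p.2 k * fderiv ℝ (fun q => fderiv ℝ H q (eV α)) p (eU k)
          = fderiv ℝ H p (eU α)) := by
  have hsy : ∀ i j, C j i = C i j := by
    intro i j
    have := congrFun (congrFun hsym i) j
    simpa [Matrix.transpose_apply] using this
  have hHfun : H = fun p : EE N => (∑ i, ∑ j, C i j * p.1 i * p.2 j) + c := funext hHp
  have hfH : ∀ p : EE N, fderiv ℝ H p = LB C p := by
    intro p
    rw [hHfun]
    exact ((hasFDerivAt_B C p).add_const c).fderiv
  have hDu : ∀ i : Fin N, (fun p : EE N => fderiv ℝ H p (eU i))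
      = fun p : EE N => ∑ j, C i j * p.2 j := by
    intro i; funext p; rw [hfH p, LB_apply_U]
  have hDv : ∀ α : Fin N, (fun p : EE N => fderiv ℝ H p (eV α))
      = fun p : EE N => ∑ m, C m α * p.1 m := by
    intro α; funext p; rw [hfH p, LB_apply_V]
  refine ⟨?_, ?_, ?_, ?_⟩
  · intro α p
    rw [hDv α]
    have : ∀ k : Fin N, fderiv ℝ (fun q : EE N => ∑ m, C m α * q.1 m) p (eV k) = 0 := by
      intro k; rw [fderiv_linU]; simp
    simp [this]
  · intro i p
    rw [hDu i]
    have : ∀ k : Fin N, fderiv ℝ (fun q : EE N => ∑ j, C i j * q.2 j) p (eU k) = 0 := by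
      intro k; rw [fderiv_linV]; simp
    simp [this]
  · intro i p
    rw [hDu i, hfH p, LB_apply_V]
    have : ∀ k : Fin N, fderiv ℝ (fun q : EE N => ∑ j, C i j * q.2 j) p (eV k) = C i k := by
      intro k; rw [fderiv_linV]; simp [Finset.sum_ite_eq', mul_ite]
    rw [Finset.sum_congr rfl (fun k _ => by rw [this k])]
    rw [Finset.sum_congr rfl (fun m (_ : m ∈ Finset.univ) =>
      (by rw [hsy m i, mul_comm] : C m i * p.1 m = p.1 m * C i m))]
  · intro α p
    rw [hDv α, hfH p, LB_apply_U]
    have : ∀ k : Fin N, fderiv ℝ (fun q : EE N => ∑ m, C m α * q.1 m) p (eU k) = C k α := by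
      intro k; rw [fderiv_linU]; simp [Finset.sum_ite_eq', mul_ite]
    rw [Finset.sum_congr rfl (fun k _ => by rw [this k])]
    rw [Finset.sum_congr rfl (fun j (_ : j ∈ Finset.univ) =>
      (by rw [← hsy α j, mul_comm] : C α j * p.2 j = p.2 j * C j α))]

/-- A smooth function `H(u,v)` on `ℝ^N × ℝ^N` satisfies the four systems
(i) `Σ_k u_k ∂²H/∂v_k∂v_α = 0`, (ii) `Σ_k v_k ∂²H/∂u_k∂u_i = 0`,
(iii) `Σ_k u_k ∂²H/∂v_k∂u_i = ∂H/∂v_i`, (iv) `Σ_k v_k ∂²H/∂u_k∂v_α = ∂H/∂u_α`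
everywhere, if and only if `H(u,v) = Σ_{i,j} C_{ij} u_i v_j + c` for some symmetric
real `N×N` matrix `C` and constant `c`. -/
theorem sp2_covariance_forces_bilinear_H
    (N : ℕ) (hN : 1 ≤ N)
    (H : (Fin N → ℝ) × (Fin N → ℝ) → ℝ)
    (hH : ContDiff ℝ (⊤ : ℕ∞) H) :
    ((∀ α : Fin N, ∀ p : (Fin N → ℝ) × (Fin N → ℝ),
        ∑ k, p.1 k * dV2 k (fun q => dV2 α H q) p = 0) ∧
     (∀ i : Fin N, ∀ p : (Fin N → ℝ) × (Fin N → ℝ),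
        ∑ k, p.2 k * dU2 k (fun q => dU2 i H q) p = 0) ∧
     (∀ i : Fin N, ∀ p : (Fin N → ℝ) × (Fin N → ℝ),
        ∑ k, p.1 k * dV2 k (fun q => dU2 i H q) p = dV2 i H p) ∧
     (∀ α : Fin N, ∀ p : (Fin N → ℝ) × (Fin N → ℝ),
        ∑ k, p.2 k * dU2 k (fun q => dV2 α H q) p = dU2 α H p))
    ↔
    (∃ (C : Matrix (Fin N) (Fin N) ℝ) (c : ℝ), C.IsSymm ∧
        ∀ p : (Fin N → ℝ) × (Fin N → ℝ),
          H p = (∑ i, ∑ j, C i j * p.1 i * p.2 j) + c) := by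
  constructor
  · rintro ⟨h1, h2, h3, h4⟩
    exact forward_main hH h1 h2 h3 h4
  · rintro ⟨C, c, hsym, hHp⟩
    exact backward_main C c hsym hHp
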